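/- arXiv:2512.01760 — 3 statements merged into one kernel-verified Lean document; each statement's English description precedes it below -/
import Mathlib

section
/- For every integer 1 ≤ d ≤ n − 1, the chromatic number of the binary projective space satisfies χ_2(n) ≤ χ_2(d) + χ_2(n + 1 − d) − 1. -/
/-- A coloring of the nonzero vectors of `F_2^n` with `k` colors is proper if no
triple `{x, y, x+y}` of distinct nonzero vectors is monochromatic. -/
def ProperColoring2 (n k : ℕ) (c : (Fin n → ZMod 2) → Fin k) : Prop :=
  ∀ x y : Fin n → ZMod 2, x ≠ 0 → y ≠ 0 → x ≠ y →
    ¬ (c x = c y ∧ c y = c (x + y))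

/-- `chi2 n` : the chromatic number of the binary projective space `PG(n-1,2)`,
i.e. the least number of colors needed to color the nonzero vectors of `F_2^n`
with no monochromatic triple `{x, y, x+y}`. -/
noncomputable def chi2 (n : ℕ) : ℕ :=
  sInf {k : ℕ | ∃ c : (Fin n → ZMod 2) → Fin k, ProperColoring2 n k c}

/-- projection to the last `m` coordinates -/
def mymu (d m : ℕ) (x : Fin (d - 1 + m) → ZMod 2) : Fin m → ZMod 2 :=
  fun i => x ⟨d - 1 + i.val, by have := i.isLt; omega⟩

/-- first `d-1` coordinates, padded with `s` in the last slot, as a vector in `F_2^d` -/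
def myP (d m : ℕ) (s : ZMod 2) (x : Fin (d - 1 + m) → ZMod 2) : Fin d → ZMod 2 :=
  fun i => if h : (i : ℕ) < d - 1 then x ⟨(i : ℕ), by omega⟩ else s

lemma mymu_add (d m : ℕ) (x y : Fin (d - 1 + m) → ZMod 2) :
    mymu d m (x + y) = mymu d m x + mymu d m y := by
  funext i; simp [mymu]

lemma myP_add (d m : ℕ) (s t : ZMod 2) (x y : Fin (d - 1 + m) → ZMod 2) :
    myP d m s x + myP d m t y = myP d m (s + t) (x + y) := by
  funext i
  by_cases h : (i : ℕ) < d - 1 <;> simp [myP, h]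

lemma mymu_zero (d m : ℕ) : mymu d m 0 = 0 := rfl

lemma myP_zero_zero (d m : ℕ) : myP d m 0 0 = 0 := by
  funext i
  by_cases h : (i : ℕ) < d - 1 <;> simp [myP, h]

lemma my_inj (d m : ℕ) (s : ZMod 2) (x y : Fin (d - 1 + m) → ZMod 2)
    (hμ : mymu d m x = mymu d m y) (hP : myP d m s x = myP d m s y) : x = y := by
  funext i
  by_cases h : (i : ℕ) < d - 1
  · have h2 := congrFun hP ⟨(i : ℕ), by omega⟩
    simp only [myP, h, dif_pos] at h2
    simpa using h2
  · have hi := i.isLt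
    have h2 := congrFun hμ ⟨(i : ℕ) - (d - 1), by omega⟩
    simp only [mymu] at h2
    have hidx : d - 1 + ((i : ℕ) - (d - 1)) = (i : ℕ) := by omega
    simp only [hidx] at h2
    simpa using h2

lemma myP_last (d m : ℕ) (hd : 1 ≤ d) (s : ZMod 2) (x : Fin (d - 1 + m) → ZMod 2) :
    myP d m s x ⟨d - 1, by omega⟩ = s := by
  simp [myP]

lemma myP_one_ne_zero (d m : ℕ) (hd : 1 ≤ d) (x : Fin (d - 1 + m) → ZMod 2) :
    myP d m 1 x ≠ 0 := by
  intro h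
  have := congrFun h ⟨d - 1, by omega⟩
  rw [myP_last d m hd] at this
  simp at this

lemma myP_zero_ne_one (d m : ℕ) (hd : 1 ≤ d) (x y : Fin (d - 1 + m) → ZMod 2) :
    myP d m 0 x ≠ myP d m 1 y := by
  intro h
  have := congrFun h ⟨d - 1, by omega⟩
  rw [myP_last d m hd, myP_last d m hd] at this
  simp at this

lemma vec_cancel {k : ℕ} (u v : Fin k → ZMod 2) (h : u + v = 0) : u = v := by
  funext i
  have := congrFun h i
  have h2 : ∀ p q : ZMod 2, p + q = 0 → p = q := by decide
  exact h2 _ _ this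

lemma vec_addself {k : ℕ} (u : Fin k → ZMod 2) : u + u = 0 := by
  funext i
  have h2 : ∀ p : ZMod 2, p + p = 0 := by decide
  exact h2 _

lemma key (d m a b : ℕ) (hd : 1 ≤ d)
    (c1 : (Fin d → ZMod 2) → Fin a) (c2 : (Fin m → ZMod 2) → Fin b)
    (h1 : ProperColoring2 d a c1) (h2 : ProperColoring2 m b c2) :
    ∃ c : (Fin (d - 1 + m) → ZMod 2) → Fin (a + b - 1),
      ProperColoring2 (d - 1 + m) (a + b - 1) c := by
  have ha : 0 < a := Nat.pos_of_ne_zero (by rintro rfl; exact (c1 0).elim0)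
  have hb : 0 < b := Nat.pos_of_ne_zero (by rintro rfl; exact (c2 0).elim0)
  refine ⟨fun x =>
    if hμ : mymu d m x = 0 then
      ⟨(c1 (myP d m 0 x)).val, by have := (c1 (myP d m 0 x)).isLt; omega⟩
    else if hβ : c2 (mymu d m x) = ⟨0, hb⟩ then
      ⟨(c1 (myP d m 1 x)).val, by have := (c1 (myP d m 1 x)).isLt; omega⟩
    else
      ⟨a - 1 + (c2 (mymu d m x)).val, by have := (c2 (mymu d m x)).isLt; omega⟩, ?_⟩
  intro x y hx hy hxy h
  obtain ⟨e1, e2⟩ := h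
  simp only at e1 e2
  -- nonzeroness transfer
  have hμadd : mymu d m (x + y) = mymu d m x + mymu d m y := mymu_add d m x y
  by_cases hμx : mymu d m x = 0 <;> by_cases hμy : mymu d m y = 0
  · -- both T0
    have hμz : mymu d m (x + y) = 0 := by rw [hμadd, hμx, hμy, add_zero]
    rw [dif_pos hμx, dif_pos hμy] at e1
    rw [dif_pos hμy, dif_pos hμz] at e2
    rw [Fin.mk.injEq] at e1 e2
    have E1 : c1 (myP d m 0 x) = c1 (myP d m 0 y) := Fin.val_injective e1
    have E2 : c1 (myP d m 0 y) = c1 (myP d m 0 (x + y)) := Fin.val_injective e2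
    have hsum : myP d m 0 x + myP d m 0 y = myP d m 0 (x + y) := by
      rw [myP_add, show (0 : ZMod 2) + 0 = 0 by decide]
    have hPx : myP d m 0 x ≠ 0 := by
      intro h0
      exact hx (my_inj d m 0 x 0 (by rw [hμx, mymu_zero]) (by rw [h0, myP_zero_zero]))
    have hPy : myP d m 0 y ≠ 0 := by
      intro h0
      exact hy (my_inj d m 0 y 0 (by rw [hμy, mymu_zero]) (by rw [h0, myP_zero_zero]))
    have hPxy : myP d m 0 x ≠ myP d m 0 y := by
      intro h0
      exact hxy (my_inj d m 0 x y (by rw [hμx, hμy]) h0)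
    exact h1 _ _ hPx hPy hPxy ⟨E1, by rw [← hsum] at E2; exact E2⟩
  · -- x T0, y not
    have hμz : mymu d m (x + y) = mymu d m y := by rw [hμadd, hμx, zero_add]
    have hμzne : ¬ mymu d m (x + y) = 0 := by rw [hμz]; exact hμy
    rw [dif_pos hμx, dif_neg hμy] at e1
    rw [dif_neg hμy, dif_neg hμzne] at e2
    by_cases hβy : c2 (mymu d m y) = ⟨0, hb⟩
    · have hβz : c2 (mymu d m (x + y)) = ⟨0, hb⟩ := by rw [hμz]; exact hβy
      rw [dif_pos hβy] at e1
      rw [dif_pos hβy, dif_pos hβz] at e2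
      rw [Fin.mk.injEq] at e1 e2
      have E1 : c1 (myP d m 0 x) = c1 (myP d m 1 y) := Fin.val_injective e1
      have E2 : c1 (myP d m 1 y) = c1 (myP d m 1 (x + y)) := Fin.val_injective e2
      have hsum : myP d m 0 x + myP d m 1 y = myP d m 1 (x + y) := by
        rw [myP_add, show (0 : ZMod 2) + 1 = 1 by decide]
      have hPx : myP d m 0 x ≠ 0 := by
        intro h0
        exact hx (my_inj d m 0 x 0 (by rw [hμx, mymu_zero]) (by rw [h0, myP_zero_zero]))
      exact h1 _ _ hPx (myP_one_ne_zero d m hd y) (myP_zero_ne_one d m hd x y)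
        ⟨E1, by rw [← hsum] at E2; exact E2⟩
    · rw [dif_neg hβy] at e1
      rw [Fin.mk.injEq] at e1
      have hc2v : (c2 (mymu d m y)).val ≠ 0 := fun h0 => hβy (Fin.val_injective h0)
      have := (c1 (myP d m 0 x)).isLt
      omega
  · -- y T0, x not
    have hμz : mymu d m (x + y) = mymu d m x := by rw [hμadd, hμy, add_zero]
    have hμzne : ¬ mymu d m (x + y) = 0 := by rw [hμz]; exact hμx
    rw [dif_neg hμx, dif_pos hμy] at e1
    rw [dif_pos hμy, dif_neg hμzne] at e2
    by_cases hβx : c2 (mymu d m x) = ⟨0, hb⟩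
    · have hβz : c2 (mymu d m (x + y)) = ⟨0, hb⟩ := by rw [hμz]; exact hβx
      rw [dif_pos hβx] at e1
      rw [dif_pos hβz] at e2
      rw [Fin.mk.injEq] at e1 e2
      have E1 : c1 (myP d m 1 x) = c1 (myP d m 0 y) := Fin.val_injective e1
      have E2 : c1 (myP d m 0 y) = c1 (myP d m 1 (x + y)) := Fin.val_injective e2
      have hsum : myP d m 1 x + myP d m 0 y = myP d m 1 (x + y) := by
        rw [myP_add, show (1 : ZMod 2) + 0 = 1 by decide]
      have hPy : myP d m 0 y ≠ 0 := by
        intro h0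
        exact hy (my_inj d m 0 y 0 (by rw [hμy, mymu_zero]) (by rw [h0, myP_zero_zero]))
      exact h1 _ _ (myP_one_ne_zero d m hd x) hPy
        (fun hh => myP_zero_ne_one d m hd y x hh.symm) ⟨E1, by rw [← hsum] at E2; exact E2⟩
    · rw [dif_neg hβx] at e1
      rw [Fin.mk.injEq] at e1
      have hc2v : (c2 (mymu d m x)).val ≠ 0 := fun h0 => hβx (Fin.val_injective h0)
      have := (c1 (myP d m 0 y)).isLt
      omega
  · -- both not T0
    rw [dif_neg hμx, dif_neg hμy] at e1
    rw [dif_neg hμy] at e2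
    by_cases hβx : c2 (mymu d m x) = ⟨0, hb⟩ <;> by_cases hβy : c2 (mymu d m y) = ⟨0, hb⟩
    · -- both Tβ
      rw [dif_pos hβx, dif_pos hβy] at e1
      rw [dif_pos hβy] at e2
      by_cases hμeq : mymu d m x = mymu d m y
      · have hμz : mymu d m (x + y) = 0 := by
          rw [hμadd, hμeq, vec_addself]
        rw [dif_pos hμz] at e2
        rw [Fin.mk.injEq] at e1 e2
        have E1 : c1 (myP d m 1 x) = c1 (myP d m 1 y) := Fin.val_injective e1
        have E2 : c1 (myP d m 1 y) = c1 (myP d m 0 (x + y)) := Fin.val_injective e2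
        have hsum : myP d m 1 x + myP d m 1 y = myP d m 0 (x + y) := by
          rw [myP_add, show (1 : ZMod 2) + 1 = 0 by decide]
        have hPxy : myP d m 1 x ≠ myP d m 1 y := by
          intro h0
          exact hxy (my_inj d m 1 x y hμeq h0)
        exact h1 _ _ (myP_one_ne_zero d m hd x) (myP_one_ne_zero d m hd y) hPxy
          ⟨E1, by rw [← hsum] at E2; exact E2⟩
      · have hμz : ¬ mymu d m (x + y) = 0 := by
          rw [hμadd]; intro h0; exact hμeq (vec_cancel _ _ h0)
        have hβz : ¬ c2 (mymu d m (x + y)) = ⟨0, hb⟩ := by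
          intro h0
          refine h2 (mymu d m x) (mymu d m y) hμx hμy hμeq ⟨hβx.trans hβy.symm, ?_⟩
          rw [hβy, ← hμadd, h0]
        rw [dif_neg hμz, dif_neg hβz] at e2
        rw [Fin.mk.injEq] at e2
        have hc2v : (c2 (mymu d m (x + y))).val ≠ 0 := fun h0 => hβz (Fin.val_injective h0)
        have := (c1 (myP d m 1 y)).isLt
        omega
    · rw [dif_pos hβx, dif_neg hβy] at e1
      rw [Fin.mk.injEq] at e1
      have hc2v : (c2 (mymu d m y)).val ≠ 0 := fun h0 => hβy (Fin.val_injective h0)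
      have := (c1 (myP d m 1 x)).isLt
      omega
    · rw [dif_neg hβx, dif_pos hβy] at e1
      rw [Fin.mk.injEq] at e1
      have hc2v : (c2 (mymu d m x)).val ≠ 0 := fun h0 => hβx (Fin.val_injective h0)
      have := (c1 (myP d m 1 y)).isLt
      omega
    · -- both TB
      rw [dif_neg hβx, dif_neg hβy] at e1
      rw [dif_neg hβy] at e2
      rw [Fin.mk.injEq] at e1
      have E1 : c2 (mymu d m x) = c2 (mymu d m y) := Fin.val_injective (by omega)
      by_cases hμeq : mymu d m x = mymu d m y
      · have hμz : mymu d m (x + y) = 0 := by rw [hμadd, hμeq, vec_addself]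
        rw [dif_pos hμz] at e2
        rw [Fin.mk.injEq] at e2
        have hc2v : (c2 (mymu d m y)).val ≠ 0 := fun h0 => hβy (Fin.val_injective h0)
        have := (c1 (myP d m 0 (x + y))).isLt
        omega
      · have hμz : ¬ mymu d m (x + y) = 0 := by
          rw [hμadd]; intro h0; exact hμeq (vec_cancel _ _ h0)
        rw [dif_neg hμz] at e2
        by_cases hβz : c2 (mymu d m (x + y)) = ⟨0, hb⟩
        · rw [dif_pos hβz] at e2
          rw [Fin.mk.injEq] at e2
          have hc2v : (c2 (mymu d m y)).val ≠ 0 := fun h0 => hβy (Fin.val_injective h0)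
          have := (c1 (myP d m 1 (x + y))).isLt
          omega
        · rw [dif_neg hβz] at e2
          rw [Fin.mk.injEq] at e2
          have E2 : c2 (mymu d m y) = c2 (mymu d m (x + y)) := Fin.val_injective (by omega)
          refine h2 (mymu d m x) (mymu d m y) hμx hμy hμeq ⟨E1, ?_⟩
          rw [← hμadd]; exact E2
  
lemma chi2_spec (k : ℕ) :
    ∃ c : (Fin k → ZMod 2) → Fin (chi2 k), ProperColoring2 k (chi2 k) c := by
  have hne : {K : ℕ | ∃ c : (Fin k → ZMod 2) → Fin K, ProperColoring2 k K c}.Nonempty := by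
    refine ⟨Fintype.card (Fin k → ZMod 2), ⇑(Fintype.equivFin (Fin k → ZMod 2)), ?_⟩
    intro x y hx hy hxy h
    exact hxy ((Fintype.equivFin (Fin k → ZMod 2)).injective h.1)
  exact Nat.sInf_mem hne

theorem chi2_recursion (n d : ℕ) (hd1 : 1 ≤ d) (hdn : d ≤ n - 1) (hn : 1 ≤ n) :
    chi2 n ≤ chi2 d + chi2 (n + 1 - d) - 1 := by
  obtain ⟨c1, hc1⟩ := chi2_spec d
  obtain ⟨c2, hc2⟩ := chi2_spec (n + 1 - d)
  obtain ⟨c, hc⟩ := key d (n + 1 - d) (chi2 d) (chi2 (n + 1 - d)) hd1 c1 c2 hc1 hc2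
  have hmem : chi2 d + chi2 (n + 1 - d) - 1 ∈
      {k : ℕ | ∃ cc : (Fin (d - 1 + (n + 1 - d)) → ZMod 2) → Fin k,
        ProperColoring2 (d - 1 + (n + 1 - d)) k cc} := ⟨c, hc⟩
  have hle : chi2 (d - 1 + (n + 1 - d)) ≤ chi2 d + chi2 (n + 1 - d) - 1 :=
    Nat.sInf_le hmem
  have hN : d - 1 + (n + 1 - d) = n := by omega
  rwa [hN] at hle
end

section
/- For all integers n ≥ 2, χ_2(n) ≤ ⌊2n/3⌋ + 1. -/
namespace Chi2Aux


variable {d m : ℕ}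

def vA (x : Fin (d+m) → ZMod 2) : Fin d → ZMod 2 := fun i => x (Fin.castAdd m i)
def vB (x : Fin (d+m) → ZMod 2) : Fin m → ZMod 2 := fun j => x (Fin.natAdd d j)

lemma vec_eq {x y : Fin (d+m) → ZMod 2} (hA : vA x = vA y) (hB : vB x = vB y) : x = y := by
  funext i
  refine Fin.addCases (fun i => ?_) (fun j => ?_) i
  · exact congrFun hA i
  · exact congrFun hB j

lemma addself {k : ℕ} (v : Fin k → ZMod 2) : v + v = 0 :=
  funext fun i => CharTwo.add_self_eq_zero (v i)

lemma cons_zero_iff {k : ℕ} {a : ZMod 2} {f : Fin k → ZMod 2} :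
    (Fin.cons a f : Fin (k+1) → ZMod 2) = 0 ↔ a = 0 ∧ f = 0 := by
  constructor
  · intro h
    exact ⟨by simpa using congrFun h 0, funext fun j => by simpa using congrFun h j.succ⟩
  · rintro ⟨rfl, rfl⟩
    funext i
    induction i using Fin.cases <;> simp

lemma cons_add {k : ℕ} (a b : ZMod 2) (f g : Fin k → ZMod 2) :
    (Fin.cons a f + Fin.cons b g : Fin (k+1) → ZMod 2) = Fin.cons (a+b) (f+g) := by
  funext i
  induction i using Fin.cases <;> simp

lemma combine {p q : ℕ} {c1 : (Fin d → ZMod 2) → Fin (p+1)} {c2 : (Fin (m+1) → ZMod 2) → Fin q}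
    (h1 : ProperColoring2 d (p+1) c1) (h2 : ProperColoring2 (m+1) q c2) :
    ∃ c : (Fin (d+m) → ZMod 2) → Fin (p+q), ProperColoring2 (d+m) (p+q) c := by
  classical
  set ε : (Fin d → ZMod 2) → ZMod 2 := fun a => if a = 0 then 0 else 1 with hε
  set L : (Fin (d+m) → ZMod 2) → (Fin (m+1) → ZMod 2) :=
    fun x => Fin.cons (ε (vA x)) (vB x) with hL
  set P : (Fin (d+m) → ZMod 2) → Prop := fun x => vA x ≠ 0 ∧ (c1 (vA x)).val < p with hP
  have hcval : ∀ x : Fin (d+m) → ZMod 2, (c1 (vA x)).val ≤ p := fun x =>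
    Nat.lt_succ_iff.mp (c1 (vA x)).isLt
  refine ⟨fun x => if h : P x then ⟨(c1 (vA x)).val, h.2.trans_le (Nat.le_add_right p q)⟩
    else ⟨p + (c2 (L x)).val, by have := (c2 (L x)).isLt; omega⟩, ?_⟩
  intro x y hx hy hxy ⟨e1, e2⟩
  beta_reduce at e1 e2
  have hAadd : vA (x + y) = vA x + vA y := rfl
  have hBadd : vB (x + y) = vB x + vB y := rfl
  have hnz : ∀ z : Fin (d+m) → ZMod 2, z ≠ 0 → vA z = 0 → vB z ≠ 0 := by
    intro z hz hA hB
    exact hz (vec_eq hA hB)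
  have hLne : ∀ z : Fin (d+m) → ZMod 2, z ≠ 0 → L z ≠ 0 := by
    intro z hz h
    rw [hL] at h
    simp only at h
    rw [cons_zero_iff] at h
    obtain ⟨h1', h2'⟩ := h
    by_cases h0 : vA z = 0
    · exact hnz z hz h0 h2'
    · rw [hε] at h1'; simp [h0] at h1'
  by_cases px : P x <;> by_cases py : P y
  · -- both small colors
    rw [dif_pos px, dif_pos py] at e1
    rw [dif_pos py] at e2
    rw [Fin.mk.injEq] at e1
    have hcc : c1 (vA x) = c1 (vA y) := Fin.ext e1
    by_cases haa : vA x = vA y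
    · have hPz : ¬ P (x + y) := by
        rintro ⟨h, _⟩
        exact h (by rw [hAadd, haa]; exact addself _)
      rw [dif_neg hPz, Fin.mk.injEq] at e2
      omega
    · by_cases pz : P (x + y)
      · rw [dif_pos pz, Fin.mk.injEq] at e2
        have hcc2 : c1 (vA y) = c1 (vA (x + y)) := Fin.ext e2
        rw [hAadd] at hcc2
        exact h1 (vA x) (vA y) px.1 py.1 haa ⟨hcc, hcc2⟩
      · rw [dif_neg pz, Fin.mk.injEq] at e2
        omega
  · rw [dif_pos px, dif_neg py, Fin.mk.injEq] at e1
    have := px.2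
    omega
  · rw [dif_neg px, dif_pos py, Fin.mk.injEq] at e1
    have := py.2
    omega
  · -- both big colors
    rw [dif_neg px, dif_neg py, Fin.mk.injEq] at e1
    rw [dif_neg py] at e2
    have hc2xy : c2 (L x) = c2 (L y) := Fin.ext (by omega)
    have hbig : ∀ z : Fin (d+m) → ZMod 2, ¬ P z → vA z ≠ 0 → (c1 (vA z)).val = p := by
      intro z hz ha
      have h' := hcval z
      have h'' : ¬ ((c1 (vA z)).val < p) := fun h => hz ⟨ha, h⟩
      omega
    by_cases haxy : vA x = vA y
    · -- same A parts
      have hbz : vB x ≠ vB y := fun hb => hxy (vec_eq haxy hb)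
      have hPz : ¬ P (x + y) := by
        rintro ⟨h, _⟩
        exact h (by rw [hAadd, haxy]; exact addself _)
      rw [dif_neg hPz, Fin.mk.injEq] at e2
      have hc2yz : c2 (L y) = c2 (L (x + y)) := Fin.ext (by omega)
      have hLadd : L (x + y) = L x + L y := by
        rw [hL]
        simp only
        rw [cons_add, hAadd, hBadd, haxy]
        congr 1
        rw [addself]
        by_cases h0 : vA y = 0 <;> simp [hε, h0, CharTwo.add_self_eq_zero]
      have hLxy : L x ≠ L y := by
        intro h
        refine hbz (funext fun j => ?_)
        have := congrFun h (Fin.succ j)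
        simpa [hL] using this
      exact h2 (L x) (L y) (hLne x hx) (hLne y hy) hLxy ⟨hc2xy, by rw [hc2yz, hLadd]⟩
    · -- different A parts
      by_cases hx0 : vA x = 0
      · by_cases hy0 : vA y = 0
        · exact haxy (hx0.trans hy0.symm)
        · have hzA : vA (x + y) ≠ 0 := by rw [hAadd, hx0]; simpa using hy0
          have hzval : (c1 (vA (x+y))).val = p := by
            rw [hAadd, hx0]
            rw [hAadd, hx0] at hzA
            have : (0 : Fin d → ZMod 2) + vA y = vA y := by simp
            rw [this]
            exact hbig y py hy0
          have hPz : ¬ P (x + y) := by rintro ⟨_, h⟩; omega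
          rw [dif_neg hPz, Fin.mk.injEq] at e2
          have hc2yz : c2 (L y) = c2 (L (x + y)) := Fin.ext (by omega)
          have hLadd : L (x + y) = L x + L y := by
            rw [hL]; simp only
            rw [cons_add, hAadd, hBadd]
            congr 1
            simp [hε, hx0, hy0]
          have hLxy : L x ≠ L y := by
            intro h
            have := congrFun h 0
            simp [hL, hε, hx0, hy0] at this
          exact h2 (L x) (L y) (hLne x hx) (hLne y hy) hLxy ⟨hc2xy, by rw [hc2yz, hLadd]⟩
      · by_cases hy0 : vA y = 0
        · have hzA : vA (x + y) ≠ 0 := by rw [hAadd, hy0]; simpa using hx0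
          have hzval : (c1 (vA (x+y))).val = p := by
            rw [hAadd, hy0]
            have : vA x + (0 : Fin d → ZMod 2) = vA x := by simp
            rw [this]
            exact hbig x px hx0
          have hPz : ¬ P (x + y) := by rintro ⟨_, h⟩; omega
          rw [dif_neg hPz, Fin.mk.injEq] at e2
          have hc2yz : c2 (L y) = c2 (L (x + y)) := Fin.ext (by omega)
          have hLadd : L (x + y) = L x + L y := by
            rw [hL]; simp only
            rw [cons_add, hAadd, hBadd]
            congr 1
            simp [hε, hx0, hy0]
          have hLxy : L x ≠ L y := by
            intro h
            have := congrFun h 0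
            simp [hL, hε, hx0, hy0] at this
          exact h2 (L x) (L y) (hLne x hx) (hLne y hy) hLxy ⟨hc2xy, by rw [hc2yz, hLadd]⟩
        · -- both A parts nonzero, distinct, in top class: contradiction via h1
          have hvx := hbig x px hx0
          have hvy := hbig y py hy0
          have hcc : c1 (vA x) = c1 (vA y) := Fin.ext (by omega)
          have hzA : vA (x + y) ≠ 0 := by
            rw [hAadd]
            intro h
            apply haxy
            have h' : vA x + vA y + vA y = (0 : Fin d → ZMod 2) + vA y := by rw [h]
            rwa [add_assoc, addself, add_zero, zero_add] at h'
          have hh := h1 (vA x) (vA y) hx0 hy0 haxy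
          have hne : c1 (vA y) ≠ c1 (vA (x + y)) := by
            rw [hAadd]; intro h; exact hh ⟨hcc, h⟩
          have hzval : (c1 (vA (x+y))).val < p := by
            have h3 := hcval (x + y)
            rcases Nat.lt_or_ge (c1 (vA (x+y))).val p with h | h
            · exact h
            · exact absurd (Fin.ext (by omega)) hne
          rw [dif_pos ⟨hzA, hzval⟩, Fin.mk.injEq] at e2
          omega



def base2 : (Fin 2 → ZMod 2) → Fin 2 := fun x =>
  if x 0 = 1 ∧ x 1 = 1 then 1 else 0

lemma base2_proper : ProperColoring2 2 2 base2 := by unfold ProperColoring2; decide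

def val3 (x : Fin 3 → ZMod 2) : ℕ := (x 0).val + 2 * (x 1).val + 4 * (x 2).val

def base3 : (Fin 3 → ZMod 2) → Fin 3 := fun x =>
  if val3 x = 1 ∨ val3 x = 2 ∨ val3 x = 4 then 0
  else if val3 x = 6 then 2 else 1

lemma base3_proper : ProperColoring2 3 3 base3 := by unfold ProperColoring2; decide

def val4 (x : Fin 4 → ZMod 2) : ℕ :=
  (x 0).val + 2 * (x 1).val + 4 * (x 2).val + 8 * (x 3).val

def base4 : (Fin 4 → ZMod 2) → Fin 3 := fun x =>
  if val4 x = 1 ∨ val4 x = 2 ∨ val4 x = 4 ∨ val4 x = 8 ∨ val4 x = 15 then 0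
  else if val4 x = 3 ∨ val4 x = 5 ∨ val4 x = 7 ∨ val4 x = 10 ∨ val4 x = 11 then 1
  else 2

lemma base4_proper : ProperColoring2 4 3 base4 := by unfold ProperColoring2; decide


lemma cast_dim {n n' k k' : ℕ} (hn : n = n') (hk : k = k')
    (h : ∃ c : (Fin n → ZMod 2) → Fin k, ProperColoring2 n k c) :
    ∃ c : (Fin n' → ZMod 2) → Fin k', ProperColoring2 n' k' c := by
  subst hn; subst hk; exact h

lemma exists_coloring : ∀ n : ℕ, 2 ≤ n →
    ∃ c : (Fin n → ZMod 2) → Fin (2 * n / 3 + 1), ProperColoring2 n (2 * n / 3 + 1) c := by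
  intro n
  induction n using Nat.strong_induction_on with
  | _ n ih =>
    intro hn
    match n, hn with
    | 2, _ => exact cast_dim rfl (by norm_num) ⟨base2, base2_proper⟩
    | 3, _ => exact cast_dim rfl (by norm_num) ⟨base3, base3_proper⟩
    | 4, _ => exact cast_dim rfl (by norm_num) ⟨base4, base4_proper⟩
    | (k+5), _ => 
      obtain ⟨c', hc'⟩ := ih (k + 2) (by omega) (by omega)
      have hq : ∃ c : (Fin ((k+1)+1) → ZMod 2) → Fin (2 * (k + 2) / 3 + 1),
          ProperColoring2 ((k+1)+1) (2 * (k + 2) / 3 + 1) c :=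
        cast_dim (by omega) rfl ⟨c', hc'⟩
      obtain ⟨c2, hc2⟩ := hq
      have h4 : ProperColoring2 4 (2+1) base4 := base4_proper
      obtain ⟨c, hc⟩ := combine (d := 4) (m := k+1) (p := 2) h4 hc2
      refine cast_dim (n := 4 + (k+1)) (by omega) ?_ ⟨c, hc⟩
      omega

end Chi2Aux

theorem chi2_le_two_thirds (n : ℕ) (hn : 2 ≤ n) : chi2 n ≤ 2 * n / 3 + 1 :=
  Nat.sInf_le (Chi2Aux.exists_coloring n hn)
end

section
/- Let n ≥ 2, let d satisfy 1 ≤ d ≤ n − 1, write points of F_2^n \ {0} as pairs (a, u) with a ∈ F_2^{n−d}, u ∈ F_2^d. Let c_U be a proper coloring of F_2^d \ {0} (no monochromatic triple {x,y,x+y}) with a distinguished color r, and define t(a,u) = 1 if u ≠ 0 and c_U(u) = r, and t(a,u) = 0 otherwise. Then for any three distinct nonzero vectors x_1 = (a_1,u_1), x_2 = (a_2,u_2), x_3 = x_1 + x_2 such that each x_i satisfies u_i = 0 or c_U(u_i) = r, we have t(x_3) = t(x_1) + t(x_2) (mod 2) and the three vectors (a_1, t(x_1)), (a_2, t(x_2)),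 (a_1+a_2, t(x_3)) in F_2^{n−d+1} are distinct, nonzero, and sum to zero. -/
theorem lift_lemma (n d K : ℕ) (hn : 2 ≤ n) (hd1 : 1 ≤ d) (hdn : d ≤ n - 1)
    (cU : (Fin d → ZMod 2) → Fin K)
    (hcU : ∀ x y : Fin d → ZMod 2, x ≠ 0 → y ≠ 0 → x ≠ y →
      ¬ (cU x = cU y ∧ cU y = cU (x + y)))
    (r : Fin K)
    (tf : (Fin (n - d) → ZMod 2) × (Fin d → ZMod 2) → ZMod 2)
    (htf : ∀ p : (Fin (n - d) → ZMod 2) × (Fin d → ZMod 2),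
      tf p = if p.2 ≠ 0 ∧ cU p.2 = r then 1 else 0) :
    ∀ x₁ x₂ x₃ : (Fin (n - d) → ZMod 2) × (Fin d → ZMod 2),
      x₁ ≠ 0 → x₂ ≠ 0 → x₃ ≠ 0 → x₁ ≠ x₂ → x₁ ≠ x₃ → x₂ ≠ x₃ →
      x₃ = x₁ + x₂ →
      (x₁.2 = 0 ∨ cU x₁.2 = r) → (x₂.2 = 0 ∨ cU x₂.2 = r) →
      (x₃.2 = 0 ∨ cU x₃.2 = r) →
      tf x₃ = tf x₁ + tf x₂ ∧
      ((x₁.1, tf x₁) : (Fin (n - d) → ZMod 2) × ZMod 2) ≠ (x₂.1, tf x₂) ∧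
      ((x₁.1, tf x₁) : (Fin (n - d) → ZMod 2) × ZMod 2) ≠ (x₁.1 + x₂.1, tf x₃) ∧
      ((x₂.1, tf x₂) : (Fin (n - d) → ZMod 2) × ZMod 2) ≠ (x₁.1 + x₂.1, tf x₃) ∧
      ((x₁.1, tf x₁) : (Fin (n - d) → ZMod 2) × ZMod 2) ≠ 0 ∧
      ((x₂.1, tf x₂) : (Fin (n - d) → ZMod 2) × ZMod 2) ≠ 0 ∧
      ((x₁.1 + x₂.1, tf x₃) : (Fin (n - d) → ZMod 2) × ZMod 2) ≠ 0 ∧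
      ((x₁.1, tf x₁) : (Fin (n - d) → ZMod 2) × ZMod 2) + (x₂.1, tf x₂)
        + (x₁.1 + x₂.1, tf x₃) = 0 := by
  intro x₁ x₂ x₃ h1 h2 h3 h12 h13 h23 hsum hc1 hc2 hc3
  have addselfU : ∀ v : Fin d → ZMod 2, v + v = 0 := fun v => by
    funext i; exact CharTwo.add_self_eq_zero _
  have addselfA : ∀ v : Fin (n - d) → ZMod 2, v + v = 0 := fun v => by
    funext i; exact CharTwo.add_self_eq_zero _
  have cancelA : ∀ a b : Fin (n - d) → ZMod 2, a + b = 0 → a = b := by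
    intro a b h
    have h' : a + b + b = b := by rw [h, zero_add]
    rwa [add_assoc, addselfA, add_zero] at h'
  have cancelU : ∀ a b : Fin d → ZMod 2, a + b = 0 → a = b := by
    intro a b h
    have h' : a + b + b = b := by rw [h, zero_add]
    rwa [add_assoc, addselfU, add_zero] at h'
  have hs2 : x₃.2 = x₁.2 + x₂.2 := by rw [hsum]; rfl
  have hs1 : x₃.1 = x₁.1 + x₂.1 := by rw [hsum]; rfl
  have key : ¬ (x₁.2 ≠ 0 ∧ x₂.2 ≠ 0 ∧ x₃.2 ≠ 0) := by
    rintro ⟨hu1, hu2, hu3⟩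
    have hne : x₁.2 ≠ x₂.2 := fun h => hu3 (by rw [hs2, h, addselfU])
    exact hcU x₁.2 x₂.2 hu1 hu2 hne
      ⟨(hc1.resolve_left hu1).trans (hc2.resolve_left hu2).symm,
       (hc2.resolve_left hu2).trans (by rw [← hs2]; exact (hc3.resolve_left hu3).symm)⟩
  have spec : ∀ p : (Fin (n - d) → ZMod 2) × (Fin d → ZMod 2),
      (p.2 = 0 ∨ cU p.2 = r) → (p.2 = 0 ∧ tf p = 0) ∨ (p.2 ≠ 0 ∧ tf p = 1) := by
    intro p hp
    by_cases h : p.2 = 0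
    · exact Or.inl ⟨h, by rw [htf]; simp [h]⟩
    · exact Or.inr ⟨h, by rw [htf]; simp [h, hp.resolve_left h]⟩
  have one_ne_zero' : (1 : ZMod 2) ≠ 0 := by decide
  rcases spec x₁ hc1 with ⟨hu1, ht1⟩ | ⟨hu1, ht1⟩ <;>
    rcases spec x₂ hc2 with ⟨hu2, ht2⟩ | ⟨hu2, ht2⟩ <;>
    rcases spec x₃ hc3 with ⟨hu3, ht3⟩ | ⟨hu3, ht3⟩
  · -- (0,0,0)
    have ha1 : x₁.1 ≠ 0 := fun h => h1 (Prod.ext h hu1)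
    have ha2 : x₂.1 ≠ 0 := fun h => h2 (Prod.ext h hu2)
    have ha12 : x₁.1 ≠ x₂.1 := fun h => h12 (Prod.ext h (hu1.trans hu2.symm))
    have ha3 : x₁.1 + x₂.1 ≠ 0 := fun h => ha12 (cancelA _ _ h)
    refine ⟨by rw [ht1, ht2, ht3]; decide, ?_, ?_, ?_, ?_, ?_, ?_, ?_⟩
    · intro h; exact ha12 (Prod.ext_iff.mp h).1
    · intro h; exact ha2 (left_eq_add.mp (Prod.ext_iff.mp h).1)
    · intro h; exact ha1 (right_eq_add.mp (Prod.ext_iff.mp h).1)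
    · intro h; exact ha1 (Prod.ext_iff.mp h).1
    · intro h; exact ha2 (Prod.ext_iff.mp h).1
    · intro h; exact ha3 (Prod.ext_iff.mp h).1
    · refine Prod.ext ?_ ?_
      · show x₁.1 + x₂.1 + (x₁.1 + x₂.1) = 0; rw [addselfA]
      · show tf x₁ + tf x₂ + tf x₃ = 0; rw [ht1, ht2, ht3]; decide
  · -- (0,0,1): contradiction
    exact absurd (by rw [hs2, hu1, hu2, add_zero]) hu3
  · -- (0,1,0): contradiction
    exact absurd (by rw [hs2, hu1, zero_add] at hu3; exact hu3) hu2
  · -- (0,1,1)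
    have ha1 : x₁.1 ≠ 0 := fun h => h1 (Prod.ext h hu1)
    refine ⟨by rw [ht1, ht2, ht3]; decide, ?_, ?_, ?_, ?_, ?_, ?_, ?_⟩
    · intro h; have h' := (Prod.ext_iff.mp h).2; rw [ht1, ht2] at h'
      exact one_ne_zero' h'.symm
    · intro h; have h' := (Prod.ext_iff.mp h).2; rw [ht1, ht3] at h'
      exact one_ne_zero' h'.symm
    · intro h; exact ha1 (right_eq_add.mp (Prod.ext_iff.mp h).1)
    · intro h; exact ha1 (Prod.ext_iff.mp h).1
    · intro h; have h' := (Prod.ext_iff.mp h).2; rw [ht2] at h'; exact one_ne_zero' h'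
    · intro h; have h' := (Prod.ext_iff.mp h).2; rw [ht3] at h'; exact one_ne_zero' h'
    · refine Prod.ext ?_ ?_
      · show x₁.1 + x₂.1 + (x₁.1 + x₂.1) = 0; rw [addselfA]
      · show tf x₁ + tf x₂ + tf x₃ = 0; rw [ht1, ht2, ht3]; decide
  · -- (1,0,0): contradiction
    exact absurd (by rw [hs2, hu2, add_zero] at hu3; exact hu3) hu1
  · -- (1,0,1)
    have ha2 : x₂.1 ≠ 0 := fun h => h2 (Prod.ext h hu2)
    refine ⟨by rw [ht1, ht2, ht3]; decide, ?_, ?_, ?_, ?_, ?_, ?_, ?_⟩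
    · intro h; have h' := (Prod.ext_iff.mp h).2; rw [ht1, ht2] at h'; exact one_ne_zero' h'
    · intro h; exact ha2 (left_eq_add.mp (Prod.ext_iff.mp h).1)
    · intro h; have h' := (Prod.ext_iff.mp h).2; rw [ht2, ht3] at h'
      exact one_ne_zero' h'.symm
    · intro h; have h' := (Prod.ext_iff.mp h).2; rw [ht1] at h'; exact one_ne_zero' h'
    · intro h; exact ha2 (Prod.ext_iff.mp h).1
    · intro h; have h' := (Prod.ext_iff.mp h).2; rw [ht3] at h'; exact one_ne_zero' h'
    · refine Prod.ext ?_ ?_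
      · show x₁.1 + x₂.1 + (x₁.1 + x₂.1) = 0; rw [addselfA]
      · show tf x₁ + tf x₂ + tf x₃ = 0; rw [ht1, ht2, ht3]; decide
  · -- (1,1,0)
    have hu12 : x₁.2 = x₂.2 := cancelU _ _ (by rw [← hs2]; exact hu3)
    have ha12 : x₁.1 ≠ x₂.1 := fun h => h12 (Prod.ext h hu12)
    have ha3 : x₁.1 + x₂.1 ≠ 0 := fun h => ha12 (cancelA _ _ h)
    refine ⟨by rw [ht1, ht2, ht3]; decide, ?_, ?_, ?_, ?_, ?_, ?_, ?_⟩
    · intro h; exact ha12 (Prod.ext_iff.mp h).1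
    · intro h; have h' := (Prod.ext_iff.mp h).2; rw [ht1, ht3] at h'; exact one_ne_zero' h'
    · intro h; have h' := (Prod.ext_iff.mp h).2; rw [ht2, ht3] at h'; exact one_ne_zero' h'
    · intro h; have h' := (Prod.ext_iff.mp h).2; rw [ht1] at h'; exact one_ne_zero' h'
    · intro h; have h' := (Prod.ext_iff.mp h).2; rw [ht2] at h'; exact one_ne_zero' h'
    · intro h; exact ha3 (Prod.ext_iff.mp h).1
    · refine Prod.ext ?_ ?_
      · show x₁.1 + x₂.1 + (x₁.1 + x₂.1) = 0; rw [addselfA]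
      · show tf x₁ + tf x₂ + tf x₃ = 0; rw [ht1, ht2, ht3]; decide
  · -- (1,1,1): contradiction
    exact absurd ⟨hu1, hu2, hu3⟩ key
end
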